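/- arXiv:math/0305335 — 2 statements merged into one kernel-verified Lean document; each statement's English description precedes it below -/
import Mathlib

section
/- Let V be a steplike potential with steps V₊, V₋ and threshold x_M. Let z ∈ ℝ with z > V₊ and z > V₋, and set r₊ = √(z − V₊) > 0 and r₋ = √(z − V₋) > 0. Suppose u is a solution of −u'' + V u = z u and there are constants T₋, R₋ ∈ ℂ with u(x) = T₋ e^{−i r₋ x} for all x ≤ −x_M and u(x) = e^{−i r₊ x} + R₋ e^{i r₊ x} for all x ≥ x_M. Then r₋ |T₋|² + r₊ |R₋|² = r₊. -/
open Complex MeasureTheory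
open scoped Classical

lemma bdd_intervalIntegrable (h : ℝ → ℂ) (hm : Measurable h) (C : ℝ)
    (hb : ∀ s, ‖h s‖ ≤ C) (a b : ℝ) : IntervalIntegrable h volume a b := by
  constructor <;>
  · refine Integrable.mono' (integrable_const C) hm.aestronglyMeasurable ?_
    exact Filter.Eventually.of_forall fun s => hb s

lemma integrable_of_bdd {S : Set ℝ} (hS : MeasurableSet S) (hfin : volume S < ⊤)
    (w : ℝ → ℂ) (hm : AEStronglyMeasurable w (volume.restrict S)) (C : ℝ)
    (hb : ∀ s ∈ S, ‖w s‖ ≤ C) : IntegrableOn w S := by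
  have : IsFiniteMeasure (volume.restrict S) := by
    constructor; rw [Measure.restrict_apply_univ]; exact hfin
  refine Integrable.mono' (integrable_const C) hm ?_
  exact (ae_restrict_mem hS).mono hb

lemma ibp_core (f h : ℝ → ℂ) (hfd : Differentiable ℝ f) (hfc : Continuous (deriv f))
    (hhm : Measurable h) (Ch : ℝ) (hhb : ∀ s, ‖h s‖ ≤ Ch)
    (a b : ℝ) (hab : a ≤ b) :
    ∫ t in Set.Ioc a b, (deriv f t * ∫ s in a..t, h s) =
      f b * (∫ s in a..b, h s) - ∫ s in Set.Ioc a b, f s * h s := by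
  set μ := volume.restrict (Set.Ioc a b) with hμ
  obtain ⟨Cf, hCf⟩ := isCompact_Icc.exists_bound_of_continuousOn (hfc.continuousOn (s := Set.Icc a b))
  obtain ⟨Cu, hCu⟩ := isCompact_Icc.exists_bound_of_continuousOn
    (hfd.continuous.continuousOn (s := Set.Icc a b))
  set Cf' := max Cf 0 with hCf'
  set Ch' := max Ch 0 with hCh'
  have hCf'' : ∀ x ∈ Set.Icc a b, ‖deriv f x‖ ≤ Cf' := fun x hx => (hCf x hx).trans (le_max_left _ _)
  have hCh'' : ∀ s, ‖h s‖ ≤ Ch' := fun s => (hhb s).trans (le_max_left _ _)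
  have hCf0 : (0:ℝ) ≤ Cf' := le_max_right _ _
  set F : ℝ × ℝ → ℂ := fun p => Set.indicator {q : ℝ × ℝ | q.2 ≤ q.1}
    (fun q => deriv f q.1 * h q.2) p with hF
  have hFmeas : Measurable F :=
    (((hfc.measurable.comp measurable_fst).mul (hhm.comp measurable_snd)).indicator
      (measurableSet_le measurable_snd measurable_fst))
  have hFint : Integrable F (μ.prod μ) := by
    refine Integrable.mono' (integrable_const (Cf' * Ch')) hFmeas.aestronglyMeasurable ?_
    rw [hμ, Measure.prod_restrict]
    refine (ae_restrict_mem (measurableSet_Ioc.prod measurableSet_Ioc)).mono ?_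
    rintro ⟨t, s⟩ hts
    simp only [Set.mem_prod, Set.mem_Ioc] at hts
    calc ‖F (t, s)‖ ≤ ‖deriv f t * h s‖ := norm_indicator_le_norm_self _ _
      _ = ‖deriv f t‖ * ‖h s‖ := norm_mul _ _
      _ ≤ Cf' * Ch' :=
          mul_le_mul (hCf'' t ⟨le_of_lt hts.1.1, hts.1.2⟩) (hCh'' s) (norm_nonneg _) hCf0
  -- step 1: rewrite LHS as double integral
  have step1 : ∫ t in Set.Ioc a b, (deriv f t * ∫ s in a..t, h s) =
      ∫ t, (∫ s, F (t, s) ∂μ) ∂μ := by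
    refine setIntegral_congr_fun measurableSet_Ioc (fun t ht => ?_)
    have h1 : (fun s => F (t, s)) = fun s => deriv f t * Set.indicator (Set.Iic t) h s := by
      funext s
      by_cases hst : s ≤ t <;> simp [hF, Set.indicator_apply, hst]
    rw [h1, integral_const_mul]
    congr 1
    rw [integral_indicator measurableSet_Iic, hμ, Measure.restrict_restrict measurableSet_Iic,
      intervalIntegral.integral_of_le ht.1.le]
    have hset : Set.Iic t ∩ Set.Ioc a b = Set.Ioc a t := by
      ext s
      simp only [Set.mem_inter_iff, Set.mem_Iic, Set.mem_Ioc]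
      exact ⟨fun ⟨h1, h2, _⟩ => ⟨h2, h1⟩, fun ⟨h1, h2⟩ => ⟨h2, h1, h2.trans ht.2⟩⟩
    rw [hset]
  -- step 2: swap
  have step2 : ∫ t, (∫ s, F (t, s) ∂μ) ∂μ = ∫ s, (∫ t, F (t, s) ∂μ) ∂μ :=
    integral_integral_swap hFint
  -- step 3: compute inner integral after swap
  have step3 : ∫ s, (∫ t, F (t, s) ∂μ) ∂μ = ∫ s in Set.Ioc a b, (f b - f s) * h s := by
    refine setIntegral_congr_fun measurableSet_Ioc (fun s hs => ?_)
    have h1 : (fun t => F (t, s)) = fun t => Set.indicator (Set.Ici s) (deriv f) t * h s := by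
      funext t
      by_cases hst : s ≤ t <;> simp [hF, Set.indicator_apply, hst]
    rw [h1, integral_mul_const]
    congr 1
    rw [integral_indicator measurableSet_Ici, hμ, Measure.restrict_restrict measurableSet_Ici]
    have h2 : Set.Ici s ∩ Set.Ioc a b = Set.Icc s b := by
      ext t
      simp only [Set.mem_inter_iff, Set.mem_Ici, Set.mem_Ioc, Set.mem_Icc]
      exact ⟨fun ⟨h1, _, h3⟩ => ⟨h1, h3⟩, fun ⟨h1, h2⟩ => ⟨h1, lt_of_lt_of_le hs.1 h1, h2⟩⟩
    rw [h2, integral_Icc_eq_integral_Ioc, ← intervalIntegral.integral_of_le hs.2]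
    exact intervalIntegral.integral_deriv_eq_sub (fun x _ => hfd x)
      (hfc.intervalIntegrable _ _)
  -- step 4: split
  have hint1 : IntegrableOn (fun s => f b * h s) (Set.Ioc a b) := by
    refine integrable_of_bdd measurableSet_Ioc measure_Ioc_lt_top _
      ((measurable_const.mul hhm).aestronglyMeasurable) (‖f b‖ * Ch') (fun s _ => ?_)
    rw [norm_mul]
    exact mul_le_mul_of_nonneg_left (hCh'' s) (norm_nonneg _)
  have hint2 : IntegrableOn (fun s => f s * h s) (Set.Ioc a b) := by
    refine integrable_of_bdd measurableSet_Ioc measure_Ioc_lt_top _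
      ((hfd.continuous.measurable.mul hhm).aestronglyMeasurable) ((max Cu 0) * Ch')
      (fun s hs => ?_)
    rw [norm_mul]
    refine mul_le_mul ((hCu s ⟨hs.1.le, hs.2⟩).trans (le_max_left _ _)) (hCh'' s)
      (norm_nonneg _) (le_max_right _ _)
  rw [step1, step2, step3]
  have : ∀ s ∈ Set.Ioc a b, (f b - f s) * h s = f b * h s - f s * h s := fun s _ => by ring
  rw [setIntegral_congr_fun measurableSet_Ioc this, integral_sub hint1 hint2,
    integral_const_mul, intervalIntegral.integral_of_le hab]

lemma ibp (f h H : ℝ → ℂ) (hfd : Differentiable ℝ f) (hfc : Continuous (deriv f))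
    (hhm : Measurable h) (Ch : ℝ) (hhb : ∀ s, ‖h s‖ ≤ Ch)
    (hH : ∀ t, H t = H 0 + ∫ s in (0:ℝ)..t, h s) (x : ℝ) :
    f x * H x - f 0 * H 0 =
      (∫ t in (0:ℝ)..x, deriv f t * H t) + ∫ t in (0:ℝ)..x, f t * h t := by
  have hint : ∀ a b : ℝ, IntervalIntegrable h volume a b := bdd_intervalIntegrable h hhm Ch hhb
  rcases le_total 0 x with hx | hx
  · set K : ℝ → ℂ := fun t => ∫ s in (0:ℝ)..t, h s with hK
    have hKc : Continuous K := intervalIntegral.continuous_primitive hint 0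
    have e1 : ∀ t ∈ Set.Ioc (0:ℝ) x, deriv f t * H t = deriv f t * H 0 + deriv f t * K t := by
      intro t _; rw [hH t]; ring
    rw [intervalIntegral.integral_of_le hx, intervalIntegral.integral_of_le hx,
      setIntegral_congr_fun measurableSet_Ioc e1,
      integral_add (f := fun t => deriv f t * H 0) (g := fun t => deriv f t * K t) ((hfc.mul continuous_const : Continuous fun t => deriv f t * H 0).integrableOn_Ioc)
        ((hfc.mul hKc : Continuous fun t => deriv f t * K t).integrableOn_Ioc),
      ibp_core f h hfd hfc hhm Ch hhb 0 x hx]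
    have e2 : ∫ t in Set.Ioc (0:ℝ) x, deriv f t * H 0 = (f x - f 0) * H 0 := by
      rw [← intervalIntegral.integral_of_le hx, intervalIntegral.integral_mul_const,
        intervalIntegral.integral_deriv_eq_sub (fun t _ => hfd t) (hfc.intervalIntegrable _ _)]
    rw [e2, hH x]
    ring
  · set K : ℝ → ℂ := fun t => ∫ s in x..t, h s with hK
    have hKc : Continuous K := intervalIntegral.continuous_primitive hint x
    have hHt : ∀ t, H t = H x + K t := by
      intro t
      rw [hH t, hH x, hK]
      simp only [add_assoc]
      congr 1
      rw [← intervalIntegral.integral_interval_sub_left (hint 0 t) (hint 0 x)]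
      ring
    have e1 : ∀ t ∈ Set.Ioc x (0:ℝ), deriv f t * H t = deriv f t * H x + deriv f t * K t := by
      intro t _; rw [hHt t]; ring
    have flip : ∀ w : ℝ → ℂ, (∫ t in (0:ℝ)..x, w t) = -∫ t in Set.Ioc x 0, w t := by
      intro w
      rw [intervalIntegral.integral_symm, intervalIntegral.integral_of_le hx]
    rw [flip, flip,
      setIntegral_congr_fun measurableSet_Ioc e1,
      integral_add (f := fun t => deriv f t * H x) (g := fun t => deriv f t * K t) ((hfc.mul continuous_const : Continuous fun t => deriv f t * H x).integrableOn_Ioc)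
        ((hfc.mul hKc : Continuous fun t => deriv f t * K t).integrableOn_Ioc),
      ibp_core f h hfd hfc hhm Ch hhb x 0 hx]
    have e2 : ∫ t in Set.Ioc x (0:ℝ), deriv f t * H x = (f 0 - f x) * H x := by
      rw [← intervalIntegral.integral_of_le hx, intervalIntegral.integral_mul_const,
        intervalIntegral.integral_deriv_eq_sub (fun t _ => hfd t) (hfc.intervalIntegrable _ _)]
    rw [e2, hHt x, hHt 0]
    have : K x = 0 := intervalIntegral.integral_same
    rw [this]
    ring

lemma intervalIntegral_conj (w : ℝ → ℂ) (a b : ℝ) :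
    (∫ t in a..b, (starRingEnd ℂ) (w t)) = (starRingEnd ℂ) (∫ t in a..b, w t) := by
  simp only [intervalIntegral, integral_conj, map_sub]

lemma hasDerivAt_cexp_mul (c : ℂ) (x₀ : ℝ) :
    HasDerivAt (fun x : ℝ => Complex.exp (c * x)) (Complex.exp (c * x₀) * c) x₀ := by
  have h1 : HasDerivAt (fun x : ℝ => (x : ℂ)) 1 x₀ := by
    simpa using (hasDerivAt_id x₀).ofReal_comp
  have h2 := (h1.const_mul c).cexp
  simpa using h2

lemma abs_exp_I_mul (c : ℂ) (hc : c.re = 0) (x : ℝ) :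
    ‖Complex.exp (c * x)‖ = 1 := by
  rw [Complex.norm_exp]
  norm_num [Complex.mul_re, hc]

/-- `u` is a solution of `-u'' + V u = z u`: `u` is differentiable with continuous
derivative, and the derivative satisfies the integrated form of the ODE. -/
def IsSolution (V : ℝ → ℝ) (z : ℂ) (u : ℝ → ℂ) : Prop :=
  Differentiable ℝ u ∧ Continuous (deriv u) ∧
    ∀ x : ℝ, deriv u x = deriv u 0 + ∫ t in (0:ℝ)..x, ((V t : ℂ) - z) * u t

theorem unitarity_minus
    (V : ℝ → ℝ) (Vp Vm xM : ℝ)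
    (hVmeas : Measurable V) (hVbdd : ∃ C : ℝ, ∀ x : ℝ, |V x| ≤ C)
    (hxM : 0 < xM)
    (hVp : ∀ x : ℝ, xM < x → V x = Vp)
    (hVm : ∀ x : ℝ, x < -xM → V x = Vm)
    (z : ℝ) (hzp : Vp < z) (hzm : Vm < z)
    (rp rm : ℝ) (hrp : rp = Real.sqrt (z - Vp)) (hrm : rm = Real.sqrt (z - Vm))
    (u : ℝ → ℂ) (hu : IsSolution V (z : ℂ) u)
    (Tm Rm : ℂ)
    (huL : ∀ x : ℝ, x ≤ -xM → u x = Tm * Complex.exp (-(Complex.I * (rm : ℂ) * x)))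
    (huR : ∀ x : ℝ, xM ≤ x →
      u x = Complex.exp (-(Complex.I * (rp : ℂ) * x)) + Rm * Complex.exp (Complex.I * (rp : ℂ) * x)) :
    rm * ‖Tm‖ ^ 2 + rp * ‖Rm‖ ^ 2 = rp := by
  obtain ⟨hud, hDc, hODE⟩ := hu
  obtain ⟨C, hC⟩ := hVbdd
  -- boundedness of u
  obtain ⟨M0, hM0⟩ := isCompact_Icc.exists_bound_of_continuousOn
    (hud.continuous.continuousOn (s := Set.Icc (-xM) xM))
  set M : ℝ := max M0 (max ‖Tm‖ (1 + ‖Rm‖)) with hM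
  have hMu : ∀ x : ℝ, ‖u x‖ ≤ M := by
    intro x
    rcases le_total x (-xM) with hx | hx
    · rw [huL x hx]
      have : ‖Complex.exp (-(Complex.I * (rm:ℂ)) * x)‖ = 1 :=
        abs_exp_I_mul _ (by simp) x
      rw [show -(Complex.I * (rm:ℂ) * (x:ℂ)) = -(Complex.I * (rm:ℂ)) * (x:ℂ) by ring] at *
      rw [norm_mul, this, mul_one]
      exact le_trans (le_max_left _ _) (le_max_right _ _)
    rcases le_total xM x with hx' | hx'
    · rw [huR x hx']
      have h1 : ‖Complex.exp (-(Complex.I * (rp:ℂ)) * x)‖ = 1 :=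
        abs_exp_I_mul _ (by simp) x
      have h2 : ‖Complex.exp ((Complex.I * (rp:ℂ)) * x)‖ = 1 :=
        abs_exp_I_mul _ (by simp) x
      refine le_trans (norm_add_le _ _) (le_trans ?_ (le_trans (le_max_right _ _) (le_max_right _ _)))
      rw [show -(Complex.I * (rp:ℂ) * (x:ℂ)) = -(Complex.I * (rp:ℂ)) * (x:ℂ) by ring,
        norm_mul, h1, h2, mul_one]
    · exact le_trans (hM0 x ⟨by linarith, hx'⟩) (le_max_left _ _)
  have hM0' : 0 ≤ M := le_trans (norm_nonneg (u 0)) (hMu 0)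
  -- the functions
  set D := deriv u with hD
  set g : ℝ → ℂ := fun t => ((V t : ℂ) - (z:ℂ)) * u t with hg
  set h : ℝ → ℂ := fun t => (starRingEnd ℂ) (g t) with hh
  set H : ℝ → ℂ := fun t => (starRingEnd ℂ) (D t) with hHdef
  have hgm : Measurable g :=
    ((Complex.measurable_ofReal.comp hVmeas).sub measurable_const).mul
      hud.continuous.measurable
  have hhm : Measurable h := Complex.continuous_conj.measurable.comp hgm
  set Ch : ℝ := (C + |z|) * M with hCh
  have hhb : ∀ s, ‖h s‖ ≤ Ch := by
    intro s
    have : ‖h s‖ = ‖g s‖ := by simp [hh]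
    rw [this, hg]
    have h1 : ((V s : ℂ) - (z:ℂ)) = ((V s - z : ℝ) : ℂ) := by push_cast; ring
    rw [norm_mul, h1, Complex.norm_real, Real.norm_eq_abs]
    have hC0 : 0 ≤ C := le_trans (abs_nonneg _) (hC 0)
    refine mul_le_mul ?_ (hMu s) (norm_nonneg _) (add_nonneg hC0 (abs_nonneg z))
    calc |V s - z| ≤ |V s| + |z| := abs_sub _ _
      _ ≤ C + |z| := by linarith [hC s]
  have hH : ∀ t, H t = H 0 + ∫ s in (0:ℝ)..t, h s := by
    intro t
    show (starRingEnd ℂ) (D t) = (starRingEnd ℂ) (D 0) + ∫ s in (0:ℝ)..t, h s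
    rw [hODE t, map_add, ← intervalIntegral_conj]
  -- integration by parts identity
  have key : ∀ x : ℝ, u x * H x - u 0 * H 0 =
      (∫ t in (0:ℝ)..x, D t * H t) + ∫ t in (0:ℝ)..x, u t * h t := fun x =>
    ibp u h H hud hDc hhm Ch hhb hH x
  -- self-conjugacy of the increments
  have selfconj : ∀ x : ℝ, (starRingEnd ℂ) (u x * H x - u 0 * H 0) = u x * H x - u 0 * H 0 := by
    intro x
    rw [key x, map_add, ← intervalIntegral_conj, ← intervalIntegral_conj]
    congr 1
    · refine intervalIntegral.integral_congr fun t _ => ?_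
      show (starRingEnd ℂ) (D t * (starRingEnd ℂ) (D t)) = D t * (starRingEnd ℂ) (D t)
      rw [map_mul, Complex.conj_conj]
      ring
    · refine intervalIntegral.integral_congr fun t _ => ?_
      show (starRingEnd ℂ) (u t * (starRingEnd ℂ) (g t)) = u t * (starRingEnd ℂ) (g t)
      rw [map_mul, Complex.conj_conj, hg]
      simp only [map_mul, map_sub, Complex.conj_ofReal]
      ring
  -- Wronskian constancy
  have hWc : ∀ x y : ℝ, u x * H x - (starRingEnd ℂ) (u x * H x) = u y * H y - (starRingEnd ℂ) (u y * H y) := by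
    intro x y
    have h1 := selfconj x
    have h2 := selfconj y
    rw [map_sub] at h1 h2
    linear_combination h2 - h1
  -- endpoints
  set a' : ℝ := -(xM + 1) with ha'def
  set b' : ℝ := xM + 1 with hb'def
  have ha'lt : a' < -xM := by rw [ha'def]; linarith
  have hb'lt : xM < b' := by rw [hb'def]; linarith
  set Ea : ℂ := Complex.exp (-(Complex.I * (rm:ℂ)) * (a':ℂ)) with hEadef
  set Fa : ℂ := Complex.exp ((Complex.I * (rm:ℂ)) * (a':ℂ)) with hFadef
  set Eb : ℂ := Complex.exp (-(Complex.I * (rp:ℂ)) * (b':ℂ)) with hEbdef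
  set Fb : ℂ := Complex.exp ((Complex.I * (rp:ℂ)) * (b':ℂ)) with hFbdef
  have hEa : Ea * Fa = 1 := by
    rw [hEadef, hFadef, ← Complex.exp_add,
      show -(Complex.I * (rm:ℂ)) * (a':ℂ) + (Complex.I * (rm:ℂ)) * (a':ℂ) = 0 by ring,
      Complex.exp_zero]
  have hEb : Eb * Fb = 1 := by
    rw [hEbdef, hFbdef, ← Complex.exp_add,
      show -(Complex.I * (rp:ℂ)) * (b':ℂ) + (Complex.I * (rp:ℂ)) * (b':ℂ) = 0 by ring,
      Complex.exp_zero]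
  have cEa : (starRingEnd ℂ) Ea = Fa := by
    rw [hEadef, hFadef, ← Complex.exp_conj]
    congr 1
    simp only [map_mul, map_neg, Complex.conj_I, Complex.conj_ofReal]
    ring
  have cFa : (starRingEnd ℂ) Fa = Ea := by
    rw [hEadef, hFadef, ← Complex.exp_conj]
    congr 1
    simp only [map_mul, Complex.conj_I, Complex.conj_ofReal]
    ring
  have cEb : (starRingEnd ℂ) Eb = Fb := by
    rw [hEbdef, hFbdef, ← Complex.exp_conj]
    congr 1
    simp only [map_mul, map_neg, Complex.conj_I, Complex.conj_ofReal]
    ring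
  have cFb : (starRingEnd ℂ) Fb = Eb := by
    rw [hEbdef, hFbdef, ← Complex.exp_conj]
    congr 1
    simp only [map_mul, Complex.conj_I, Complex.conj_ofReal]
    ring
  -- values at the endpoints
  have hu_a : u a' = Tm * Ea := by
    rw [huL a' (le_of_lt ha'lt), hEadef,
      show -(Complex.I * (rm:ℂ)) * (a':ℂ) = -(Complex.I * (rm:ℂ) * (a':ℂ)) from by ring]
  have hu_b : u b' = Eb + Rm * Fb := by
    rw [huR b' (le_of_lt hb'lt), hEbdef, hFbdef,
      show -(Complex.I * (rp:ℂ)) * (b':ℂ) = -(Complex.I * (rp:ℂ) * (b':ℂ)) from by ring]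
  have hDa : D a' = Tm * (Ea * (-(Complex.I * (rm:ℂ)))) := by
    have hev : u =ᶠ[nhds a'] fun x : ℝ => Tm * Complex.exp (-(Complex.I * (rm:ℂ)) * (x:ℂ)) := by
      filter_upwards [Iio_mem_nhds ha'lt] with x hx
      rw [huL x (le_of_lt hx),
        show -(Complex.I * (rm:ℂ)) * (x:ℂ) = -(Complex.I * (rm:ℂ) * (x:ℂ)) from by ring]
    rw [hD, hev.deriv_eq, hEadef]
    exact ((hasDerivAt_cexp_mul (-(Complex.I * (rm:ℂ))) a').const_mul Tm).deriv
  have hDb : D b' = Eb * (-(Complex.I * (rp:ℂ))) + Rm * (Fb * (Complex.I * (rp:ℂ))) := by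
    have hev : u =ᶠ[nhds b'] fun x : ℝ =>
        Complex.exp (-(Complex.I * (rp:ℂ)) * (x:ℂ)) +
          Rm * Complex.exp ((Complex.I * (rp:ℂ)) * (x:ℂ)) := by
      filter_upwards [Ioi_mem_nhds hb'lt] with x hx
      rw [huR x (le_of_lt hx),
        show -(Complex.I * (rp:ℂ)) * (x:ℂ) = -(Complex.I * (rp:ℂ) * (x:ℂ)) from by ring]
    rw [hD, hev.deriv_eq, hEbdef, hFbdef]
    exact ((hasDerivAt_cexp_mul (-(Complex.I * (rp:ℂ))) b').add
      ((hasDerivAt_cexp_mul ((Complex.I * (rp:ℂ))) b').const_mul Rm)).deriv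
  -- assemble the final equation
  have E := hWc b' a'
  simp only [hHdef] at E
  rw [hu_a, hu_b, hDa, hDb] at E
  simp only [map_mul, map_add, map_neg, Complex.conj_conj, Complex.conj_I,
    Complex.conj_ofReal, cEa, cFa, cEb, cFb] at E
  have goalC : (rm:ℂ) * (Tm * (starRingEnd ℂ) Tm) + (rp:ℂ) * (Rm * (starRingEnd ℂ) Rm) = (rp:ℂ) := by
    linear_combination (Complex.I / 2) * E + (-(rm:ℂ) * Tm * (starRingEnd ℂ) Tm) * hEa +
      ((rp:ℂ) - (rp:ℂ) * Rm * (starRingEnd ℂ) Rm) * hEb +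
      ((rm:ℂ) * Tm * (starRingEnd ℂ) Tm * Ea * Fa + (rp:ℂ) * Rm * (starRingEnd ℂ) Rm * Eb * Fb -
        (rp:ℂ) * Eb * Fb) * Complex.I_sq
  have h1 : Tm * (starRingEnd ℂ) Tm = ((‖Tm‖ ^ 2 : ℝ) : ℂ) := by
    rw [Complex.mul_conj]
    norm_cast
    exact (Complex.sq_norm Tm).symm
  have h2 : Rm * (starRingEnd ℂ) Rm = ((‖Rm‖ ^ 2 : ℝ) : ℂ) := by
    rw [Complex.mul_conj]
    norm_cast
    exact (Complex.sq_norm Rm).symm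
  rw [h1, h2] at goalC
  exact_mod_cast goalC
end

section
/- Let V be a steplike potential with steps V₊, V₋ and threshold x_M. Let z ∈ ℝ with z > V₊ and z > V₋, and set r₊ = √(z − V₊) > 0 and r₋ = √(z − V₋) > 0. Suppose u and v are solutions of −u'' + V u = z u, and there are constants T₋, R₋, T₊, R₊ ∈ ℂ with: u(x) = T₋ e^{−i r₋ x} for all x ≤ −x_M and u(x) = e^{−i r₊ x} + R₋ e^{i r₊ x} for all x ≥ x_M; v(x) = e^{i r₋ x} + R₊ e^{−i r₋ x} for all x ≤ −x_M and v(x) = T₊ e^{i r₊ x} for all x ≥ x_M. Then r₋ T₋ · conj(R₊) + r₊ R₋ · conj(T₊) = 0, where conj denotes complex conjugation. -/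
open Complex MeasureTheory
open scoped Classical

lemma bnd_intervalIntegrable (f : ℝ → ℂ) (hf : Measurable f) (M : ℝ → ℝ)
    (hM : Continuous M) (hfM : ∀ x, ‖f x‖ ≤ M x) (p q : ℝ) :
    IntervalIntegrable f MeasureTheory.volume p q := by
  rw [intervalIntegrable_iff]
  obtain ⟨C, hC⟩ := (isCompact_uIcc (a := p) (b := q)).exists_bound_of_continuousOn
    hM.continuousOn
  apply MeasureTheory.Measure.integrableOn_of_bounded (M := C)
  · exact ne_of_lt (lt_of_le_of_lt (measure_mono Set.uIoc_subset_uIcc)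
      (by rw [Set.uIcc, Real.volume_Icc]; exact ENNReal.ofReal_lt_top))
  · exact hf.aestronglyMeasurable
  · refine (MeasureTheory.ae_restrict_iff' measurableSet_uIoc).2
      (Filter.Eventually.of_forall fun x hx => ?_)
    exact (hfM x).trans ((le_abs_self (M x)).trans (hC x (Set.uIoc_subset_uIcc hx)))

lemma ibp_swap (f : ℝ → ℂ) (hf : Measurable f) (M : ℝ → ℝ)
    (hM : Continuous M) (hfM : ∀ x, ‖f x‖ ≤ M x)
    (g : ℝ → ℂ) (hg : Differentiable ℝ g) (hg' : Continuous (deriv g))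
    (a b : ℝ) (hab : a ≤ b) :
    ∫ t in a..b, deriv g t * (∫ s in a..t, f s) =
      g b * (∫ s in a..b, f s) - ∫ s in a..b, g s * f s := by
  obtain ⟨C, hC⟩ := (isCompact_Icc (a := a) (b := b)).exists_bound_of_continuousOn
    hM.continuousOn
  have hC' : ∀ x ∈ Set.Icc a b, ‖f x‖ ≤ C :=
    fun x hx => (hfM x).trans ((le_abs_self (M x)).trans (hC x hx))
  have hC0 : 0 ≤ C := le_trans (norm_nonneg (f a)) (hC' a ⟨le_rfl, hab⟩)
  obtain ⟨D, hD⟩ := (isCompact_Icc (a := a) (b := b)).exists_bound_of_continuousOn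
    hg'.continuousOn
  have hD0 : 0 ≤ D := le_trans (norm_nonneg _) (hD a ⟨le_rfl, hab⟩)
  set μ := MeasureTheory.volume.restrict (Set.Ioc a b) with hμdef
  haveI hfin : IsFiniteMeasure μ := by
    constructor
    rw [hμdef, Measure.restrict_apply_univ, Real.volume_Ioc]
    exact ENNReal.ofReal_lt_top
  set F : ℝ → ℝ → ℂ := fun t s => if s ≤ t then deriv g t * f s else 0 with hFdef
  have hFmeas : Measurable (Function.uncurry F) := by
    apply Measurable.ite
    · exact measurableSet_le measurable_snd measurable_fst
    · exact (hg'.measurable.comp measurable_fst).mul (hf.comp measurable_snd)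
    · exact measurable_const
  have hFint : Integrable (Function.uncurry F) (μ.prod μ) := by
    apply Integrable.mono' (integrable_const (D * C)) hFmeas.aestronglyMeasurable
    rw [hμdef, Measure.prod_restrict]
    refine (MeasureTheory.ae_restrict_iff' (measurableSet_Ioc.prod measurableSet_Ioc)).2
      (Filter.Eventually.of_forall ?_)
    rintro ⟨t, s⟩ ⟨ht, hs⟩
    simp only [Function.uncurry, hFdef]
    split_ifs
    · rw [norm_mul]
      exact mul_le_mul (hD t ⟨ht.1.le, ht.2⟩) (hC' s ⟨hs.1.le, hs.2⟩) (norm_nonneg _) hD0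
    · simpa using mul_nonneg hD0 hC0
  have hfi : ∀ p q : ℝ, IntervalIntegrable f MeasureTheory.volume p q :=
    bnd_intervalIntegrable f hf M hM hfM
  have stepA : ∀ t ∈ Set.Ioc a b,
      deriv g t * (∫ s in a..t, f s) = ∫ s, F t s ∂μ := by
    intro t ht
    have h1 : Set.EqOn (fun s => F t s)
        (fun s => Set.indicator (Set.Ioc a t) f s * deriv g t) (Set.Ioc a b) := by
      intro s hs
      simp only [hFdef, Set.indicator]
      by_cases h : s ≤ t
      · simp [h, Set.mem_Ioc, hs.1, mul_comm]
      · simp [h, Set.mem_Ioc]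
    rw [hμdef, show (∫ s, F t s ∂(MeasureTheory.volume.restrict (Set.Ioc a b))) =
        ∫ s in Set.Ioc a b, F t s from rfl,
      MeasureTheory.setIntegral_congr_fun measurableSet_Ioc h1,
      MeasureTheory.integral_mul_const,
      MeasureTheory.setIntegral_indicator measurableSet_Ioc,
      Set.Ioc_inter_Ioc, sup_idem, inf_of_le_right ht.2,
      ← intervalIntegral.integral_of_le ht.1.le, mul_comm]
  have stepB : ∀ s ∈ Set.Ioc a b,
      (∫ t, F t s ∂μ) = (g b - g s) * f s := by
    intro s hs
    have h1 : Set.EqOn (fun t => F t s)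
        (Set.indicator (Set.Ici s) (fun t => deriv g t * f s)) (Set.Ioc a b) := by
      intro t _
      simp only [hFdef, Set.indicator, Set.mem_Ici]
    have h2 : Set.Ioc a b ∩ Set.Ici s = Set.Icc s b := by
      ext t
      simp only [Set.mem_inter_iff, Set.mem_Ioc, Set.mem_Ici, Set.mem_Icc]
      constructor
      · rintro ⟨⟨_, h1'⟩, h2'⟩; exact ⟨h2', h1'⟩
      · rintro ⟨h1', h2'⟩; exact ⟨⟨lt_of_lt_of_le hs.1 h1', h2'⟩, h1'⟩
    rw [hμdef, show (∫ t, F t s ∂(MeasureTheory.volume.restrict (Set.Ioc a b))) =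
        ∫ t in Set.Ioc a b, F t s from rfl,
      MeasureTheory.setIntegral_congr_fun measurableSet_Ioc h1,
      MeasureTheory.setIntegral_indicator measurableSet_Ici, h2,
      MeasureTheory.integral_Icc_eq_integral_Ioc,
      ← intervalIntegral.integral_of_le hs.2,
      intervalIntegral.integral_mul_const,
      intervalIntegral.integral_deriv_eq_sub (fun x _ => hg.differentiableAt)
        (hg'.intervalIntegrable s b)]
  calc ∫ t in a..b, deriv g t * (∫ s in a..t, f s)
      = ∫ t in Set.Ioc a b, deriv g t * (∫ s in a..t, f s) :=
        intervalIntegral.integral_of_le hab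
    _ = ∫ t, (∫ s, F t s ∂μ) ∂μ := MeasureTheory.setIntegral_congr_fun measurableSet_Ioc stepA
    _ = ∫ s, (∫ t, F t s ∂μ) ∂μ := MeasureTheory.integral_integral_swap hFint
    _ = ∫ s in Set.Ioc a b, (g b - g s) * f s :=
        MeasureTheory.setIntegral_congr_fun measurableSet_Ioc stepB
    _ = ∫ s in a..b, (g b - g s) * f s := (intervalIntegral.integral_of_le hab).symm
    _ = g b * (∫ s in a..b, f s) - ∫ s in a..b, g s * f s := by
        rw [intervalIntegral.integral_congr
          (g := fun s => g b * f s - g s * f s) (fun s _ => by ring),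
          intervalIntegral.integral_sub ((hfi a b).const_mul (g b))
            (bnd_intervalIntegrable (fun x => g x * f x)
              (hg.continuous.measurable.mul hf) (fun x => ‖g x‖ * M x)
              (hg.continuous.norm.mul hM)
              (fun x => by
                rw [norm_mul]
                exact mul_le_mul_of_nonneg_left (hfM x) (norm_nonneg _)) a b),
          intervalIntegral.integral_const_mul]

lemma ibp_full (f : ℝ → ℂ) (hf : Measurable f) (M : ℝ → ℝ)
    (hM : Continuous M) (hfM : ∀ x, ‖f x‖ ≤ M x)
    (g : ℝ → ℂ) (hg : Differentiable ℝ g) (hg' : Continuous (deriv g))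
    (φ : ℝ → ℂ) (c : ℂ) (hφ : ∀ x, φ x = c + ∫ s in (0:ℝ)..x, f s)
    (a b : ℝ) (hab : a ≤ b) :
    g b * φ b - g a * φ a =
      (∫ t in a..b, deriv g t * φ t) + ∫ t in a..b, g t * f t := by
  have hfi : ∀ p q : ℝ, IntervalIntegrable f MeasureTheory.volume p q :=
    bnd_intervalIntegrable f hf M hM hfM
  have hφa : ∀ x, φ x = φ a + ∫ s in a..x, f s := by
    intro x
    rw [hφ x, hφ a, add_assoc, intervalIntegral.integral_add_adjacent_intervals (hfi 0 a) (hfi a x)]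
  have h1 : Set.EqOn (fun t => deriv g t * φ t)
      (fun t => deriv g t * φ a + deriv g t * (∫ s in a..t, f s)) (Set.uIcc a b) := by
    intro t _
    simp only
    rw [hφa t]; ring
  rw [intervalIntegral.integral_congr h1,
    intervalIntegral.integral_add (f := fun t => deriv g t * φ a)
      (g := fun t => deriv g t * (∫ s in a..t, f s)) ((hg'.intervalIntegrable a b).mul_const (φ a))
      ((hg'.mul (intervalIntegral.continuous_primitive hfi a)).intervalIntegrable a b),
    intervalIntegral.integral_mul_const,
    intervalIntegral.integral_deriv_eq_sub (fun x _ => hg.differentiableAt)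
      (hg'.intervalIntegrable a b),
    ibp_swap f hf M hM hfM g hg hg' a b hab, hφa b]
  ring

lemma hasDerivAt_cexp_lin (c : ℂ) (x : ℝ) :
    HasDerivAt (fun t : ℝ => Complex.exp (c * t)) (c * Complex.exp (c * x)) x := by
  have h0 : HasDerivAt (fun t : ℝ => (t : ℂ)) 1 x := by
    simpa using (hasDerivAt_id x).ofReal_comp
  have h1 : HasDerivAt (fun t : ℝ => c * (t : ℂ)) c x := by simpa using h0.const_mul c
  simpa [mul_comm] using h1.cexp

lemma interval_integral_conj (f : ℝ → ℂ) (a b : ℝ) :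
    (∫ x in a..b, (starRingEnd ℂ) (f x)) = (starRingEnd ℂ) (∫ x in a..b, f x) := by
  rw [intervalIntegral, intervalIntegral, integral_conj,
    integral_conj, map_sub]

theorem orthogonality_relation
    (V : ℝ → ℝ) (Vp Vm xM : ℝ)
    (hVmeas : Measurable V) (hVbdd : ∃ C : ℝ, ∀ x : ℝ, |V x| ≤ C)
    (hxM : 0 < xM)
    (hVp : ∀ x : ℝ, xM < x → V x = Vp)
    (hVm : ∀ x : ℝ, x < -xM → V x = Vm)
    (z : ℝ) (hzp : Vp < z) (hzm : Vm < z)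
    (rp rm : ℝ) (hrp : rp = Real.sqrt (z - Vp)) (hrm : rm = Real.sqrt (z - Vm))
    (u v : ℝ → ℂ) (hu : IsSolution V (z : ℂ) u) (hv : IsSolution V (z : ℂ) v)
    (Tm Rm Tp Rp : ℂ)
    (huL : ∀ x : ℝ, x ≤ -xM → u x = Tm * Complex.exp (-(Complex.I * (rm : ℂ) * x)))
    (huR : ∀ x : ℝ, xM ≤ x →
      u x = Complex.exp (-(Complex.I * (rp : ℂ) * x)) + Rm * Complex.exp (Complex.I * (rp : ℂ) * x))
    (hvL : ∀ x : ℝ, x ≤ -xM →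
      v x = Complex.exp (Complex.I * (rm : ℂ) * x) + Rp * Complex.exp (-(Complex.I * (rm : ℂ) * x)))
    (hvR : ∀ x : ℝ, xM ≤ x → v x = Tp * Complex.exp (Complex.I * (rp : ℂ) * x)) :
    (rm : ℂ) * Tm * (starRingEnd ℂ) Rp + (rp : ℂ) * Rm * (starRingEnd ℂ) Tp = 0 := by
  obtain ⟨CV, hCV⟩ := hVbdd
  obtain ⟨hud, hud', huode⟩ := hu
  obtain ⟨hvd, hvd', hvode⟩ := hv
  set w : ℝ → ℂ := fun x => (starRingEnd ℂ) (v x) with hwdef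
  have hwderiv : ∀ x, HasDerivAt w ((starRingEnd ℂ) (deriv v x)) x := by
    intro x
    simpa only [hwdef, starRingEnd_apply] using ((hvd x).hasDerivAt).star
  have hwd : Differentiable ℝ w := fun x => (hwderiv x).differentiableAt
  have hwderiv' : deriv w = fun x => (starRingEnd ℂ) (deriv v x) :=
    funext fun x => (hwderiv x).deriv
  have hwd' : Continuous (deriv w) := by
    rw [hwderiv']; exact continuous_star.comp hvd'
  have hwode : ∀ x : ℝ, deriv w x = deriv w 0 +
      ∫ t in (0:ℝ)..x, ((V t : ℂ) - (z:ℂ)) * w t := by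
    intro x
    rw [hwderiv']
    simp only
    rw [hvode x, map_add, ← interval_integral_conj]
    congr 1
    apply intervalIntegral.integral_congr
    intro t _
    simp only [hwdef, map_mul, map_sub, Complex.conj_ofReal]
  have hucont := hud.continuous
  have hwcont := hwd.continuous
  have hbound : ∀ (h : ℝ → ℂ) (t : ℝ), ‖((V t : ℂ) - (z:ℂ)) * h t‖ ≤
      (CV + ‖(z:ℂ)‖) * ‖h t‖ := by
    intro h t
    rw [norm_mul]
    apply mul_le_mul_of_nonneg_right _ (norm_nonneg _)
    calc ‖((V t : ℂ) - (z:ℂ))‖ ≤ ‖((V t):ℂ)‖ + ‖(z:ℂ)‖ := norm_sub_le _ _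
      _ ≤ CV + ‖(z:ℂ)‖ := by
          have : ‖((V t):ℂ)‖ = |V t| := by simp [Complex.norm_real]
          rw [this]
          exact add_le_add (hCV t) le_rfl
  have hVz : Measurable fun t : ℝ => ((V t : ℂ) - (z:ℂ)) :=
    (Complex.measurable_ofReal.comp hVmeas).sub measurable_const
  set b : ℝ := xM + 1 with hbdef
  set a : ℝ := -(xM + 1) with hadef
  have hab : a ≤ b := by rw [hadef, hbdef]; linarith
  have hb : xM ≤ b := by rw [hbdef]; linarith
  have hb' : xM < b := by rw [hbdef]; linarith
  have ha : a ≤ -xM := by rw [hadef]; linarith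
  have ha' : a < -xM := by rw [hadef]; linarith
  have E1 := ibp_full (fun t => ((V t : ℂ) - (z:ℂ)) * w t) (hVz.mul hwcont.measurable)
    (fun x => (CV + ‖(z:ℂ)‖) * ‖w x‖) (continuous_const.mul hwcont.norm)
    (hbound w) u hud hud' (deriv w) (deriv w 0) hwode a b hab
  have E2 := ibp_full (fun t => ((V t : ℂ) - (z:ℂ)) * u t) (hVz.mul hucont.measurable)
    (fun x => (CV + ‖(z:ℂ)‖) * ‖u x‖) (continuous_const.mul hucont.norm)
    (hbound u) w hwd hwd' (deriv u) (deriv u 0) huode a b hab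
  have E3 : (∫ t in a..b, deriv u t * deriv w t) = ∫ t in a..b, deriv w t * deriv u t :=
    intervalIntegral.integral_congr (fun t _ => mul_comm _ _)
  have E4 : (∫ t in a..b, u t * (((V t : ℂ) - (z:ℂ)) * w t)) =
      ∫ t in a..b, w t * (((V t : ℂ) - (z:ℂ)) * u t) :=
    intervalIntegral.integral_congr (fun t _ => by ring)
  have key : u b * deriv w b - w b * deriv u b = u a * deriv w a - w a * deriv u a := by
    linear_combination E1 - E2 + E3 + E4
  -- formulas for w on the tails
  have hwR : ∀ x : ℝ, xM ≤ x →
      w x = (starRingEnd ℂ) Tp * Complex.exp (-(Complex.I * (rp : ℂ) * x)) := by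
    intro x hx
    rw [hwdef]
    simp only
    rw [hvR x hx, map_mul, ← Complex.exp_conj]
    congr 2
    simp [Complex.conj_ofReal]
  have hwL : ∀ x : ℝ, x ≤ -xM →
      w x = Complex.exp (-(Complex.I * (rm : ℂ) * x)) +
        (starRingEnd ℂ) Rp * Complex.exp (Complex.I * (rm : ℂ) * x) := by
    intro x hx
    rw [hwdef]
    simp only
    rw [hvL x hx, map_add, map_mul, ← Complex.exp_conj, ← Complex.exp_conj]
    congr 2
    · simp [Complex.conj_ofReal]
    · simp [Complex.conj_ofReal]
  -- derivatives at the endpoints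
  have hevuR : u =ᶠ[nhds b] (fun x : ℝ => Complex.exp (-(Complex.I * (rp : ℂ) * x)) +
      Rm * Complex.exp (Complex.I * (rp : ℂ) * x)) :=
    Filter.eventuallyEq_of_mem (Ioi_mem_nhds hb') (fun x hx => huR x (le_of_lt hx))
  have hevwR : w =ᶠ[nhds b] (fun x : ℝ =>
      (starRingEnd ℂ) Tp * Complex.exp (-(Complex.I * (rp : ℂ) * x))) :=
    Filter.eventuallyEq_of_mem (Ioi_mem_nhds hb') (fun x hx => hwR x (le_of_lt hx))
  have hevuL : u =ᶠ[nhds a] (fun x : ℝ => Tm * Complex.exp (-(Complex.I * (rm : ℂ) * x))) :=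
    Filter.eventuallyEq_of_mem (Iio_mem_nhds ha') (fun x hx => huL x (le_of_lt hx))
  have hevwL : w =ᶠ[nhds a] (fun x : ℝ => Complex.exp (-(Complex.I * (rm : ℂ) * x)) +
      (starRingEnd ℂ) Rp * Complex.exp (Complex.I * (rm : ℂ) * x)) :=
    Filter.eventuallyEq_of_mem (Iio_mem_nhds ha') (fun x hx => hwL x (le_of_lt hx))
  have h1 := hasDerivAt_cexp_lin (-(Complex.I * (rp:ℂ))) b
  simp only [neg_mul] at h1
  have h2 := (hasDerivAt_cexp_lin (Complex.I * (rp:ℂ)) b).const_mul Rm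
  have hDub := ((h1.add h2).congr_of_eventuallyEq hevuR).deriv
  have h3 := (h1.const_mul ((starRingEnd ℂ) Tp))
  have hDwb := (h3.congr_of_eventuallyEq hevwR).deriv
  have h4 := hasDerivAt_cexp_lin (-(Complex.I * (rm:ℂ))) a
  simp only [neg_mul] at h4
  have h4c := h4.const_mul Tm
  have hDua := (h4c.congr_of_eventuallyEq hevuL).deriv
  have h5 := h4.add ((hasDerivAt_cexp_lin (Complex.I * (rm:ℂ)) a).const_mul ((starRingEnd ℂ) Rp))
  have hDwa := (h5.congr_of_eventuallyEq hevwL).deriv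
  have hRval : u b * deriv w b - w b * deriv u b =
      -(2 * Complex.I * (rp : ℂ) * Rm * (starRingEnd ℂ) Tp) := by
    rw [huR b hb, hwR b hb, hDub, hDwb]
    have hP : Complex.exp (Complex.I * (rp : ℂ) * (b : ℂ)) ≠ 0 := Complex.exp_ne_zero _
    simp only [Complex.exp_neg]
    field_simp
    ring
  have hLval : u a * deriv w a - w a * deriv u a =
      2 * Complex.I * (rm : ℂ) * Tm * (starRingEnd ℂ) Rp := by
    rw [huL a ha, hwL a ha, hDua, hDwa]
    have hQ : Complex.exp (Complex.I * (rm : ℂ) * (a : ℂ)) ≠ 0 := Complex.exp_ne_zero _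
    simp only [Complex.exp_neg]
    field_simp
    ring
  have keyv : -(2 * Complex.I * (rp : ℂ) * Rm * (starRingEnd ℂ) Tp) =
      2 * Complex.I * (rm : ℂ) * Tm * (starRingEnd ℂ) Rp := by
    rw [← hRval, ← hLval]; exact key
  have hkey2 : (2 * Complex.I) * ((rm : ℂ) * Tm * (starRingEnd ℂ) Rp +
      (rp : ℂ) * Rm * (starRingEnd ℂ) Tp) = (2 * Complex.I) * 0 := by
    rw [mul_zero]
    linear_combination -keyv
  exact mul_left_cancel₀ (mul_ne_zero two_ne_zero Complex.I_ne_zero) hkey2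
end
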